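/- arXiv:0903.0784 — 2 statements merged into one kernel-verified Lean document; each statement's English description precedes it below -/
import Mathlib

section
/- The number of independent sets of size k ≥ 1 in a cycle graph on L ≥ 3 vertices equals (L/(L-k))·C(L-k, k). -/
/-- The independence complex of the cycle graph on `L` vertices `0, …, L-1`. -/
def cycleIndep (L : ℕ) : Finset (Finset ℕ) :=
  (Finset.range L).powerset.filter (fun σ => ∀ i ∈ σ, (i + 1) % L ∉ σ)

def pathIndep (a m : ℕ) : Finset (Finset ℕ) :=
  (Finset.Ico a (a+m)).powerset.filter (fun σ => ∀ i ∈ σ, i + 1 ∉ σ)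

lemma mem_pathIndep {a m : ℕ} {σ : Finset ℕ} :
    σ ∈ pathIndep a m ↔ (∀ i ∈ σ, a ≤ i ∧ i < a + m) ∧ ∀ i ∈ σ, i + 1 ∉ σ := by
  simp [pathIndep, Finset.subset_iff, Finset.mem_Ico]

lemma empty_mem_pathIndep (a m : ℕ) : ∅ ∈ pathIndep a m := by
  simp [pathIndep]

lemma filter_card_zero {S : Finset (Finset ℕ)} (h : ∅ ∈ S) :
    S.filter (fun σ => σ.card = 0) = {∅} := by
  ext σ
  simp only [Finset.mem_filter, Finset.card_eq_zero, Finset.mem_singleton]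
  constructor
  · rintro ⟨_, rfl⟩; rfl
  · rintro rfl; exact ⟨h, rfl⟩

lemma path_count (m : ℕ) : ∀ k a, ((pathIndep a m).filter (fun σ => σ.card = k)).card
    = (m + 1 - k).choose k := by
  induction m using Nat.strong_induction_on with
  | _ m ih =>
  intro k a
  match m with
  | 0 =>
    have h0 : pathIndep a 0 = {∅} := by
      ext σ
      simp only [mem_pathIndep, Finset.mem_singleton]
      constructor
      · rintro ⟨h1, _⟩
        rw [Finset.eq_empty_iff_forall_notMem]
        intro i hi
        have := h1 i hi; omega
      · rintro rfl; simp
    rw [h0]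
    match k with
    | 0 => rw [filter_card_zero (Finset.mem_singleton_self _)]; simp
    | k+1 =>
      have e1 : 1-(k+1) = 0 := by omega
      have c1 : (0:ℕ).choose (k+1) = 0 := Nat.choose_eq_zero_of_lt (by omega)
      rw [e1, c1]
      simp [Finset.filter_singleton]
  | 1 =>
    have hIco : Finset.Ico a (a+1) = {a} := by
      ext i; simp [Finset.mem_Ico]
    have h1 : pathIndep a 1 = {∅, {a}} := by
      have hpow : ({a} : Finset ℕ).powerset = {∅, {a}} := by
        ext σ
        simp [Finset.subset_singleton_iff]
      unfold pathIndep
      rw [hIco, hpow, Finset.filter_true_of_mem]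
      intro σ hσ i hi hi1
      simp only [Finset.mem_insert, Finset.mem_singleton] at hσ
      rcases hσ with rfl | rfl
      · simp at hi
      · simp only [Finset.mem_singleton] at hi hi1; omega
    rw [h1]
    match k with
    | 0 =>
      rw [filter_card_zero (by simp)]; simp
    | 1 =>
      have : ({∅, {a}} : Finset (Finset ℕ)).filter (fun σ => σ.card = 1) = {{a}} := by
        ext σ
        simp only [Finset.mem_filter, Finset.mem_insert, Finset.mem_singleton]
        constructor
        · rintro ⟨rfl | rfl, hc⟩
          · simp at hc
          · rfl
        · rintro rfl; simp
      rw [this]; simp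
    | k+2 =>
      have : ({∅, {a}} : Finset (Finset ℕ)).filter (fun σ => σ.card = k+2) = ∅ := by
        ext σ
        simp only [Finset.mem_filter, Finset.mem_insert, Finset.mem_singleton,
          Finset.notMem_empty, iff_false, not_and]
        rintro (rfl | rfl) <;> simp
      rw [this]
      simp [Nat.choose_eq_zero_of_lt (show 2-(k+2) < k+2 by omega)]
  | (m+2) =>
    match k with
    | 0 =>
      rw [filter_card_zero (empty_mem_pathIndep a (m+2))]; simp
    | k+1 =>
      have hsplit := Finset.card_filter_add_card_filter_not
        (s := (pathIndep a (m+2)).filter (fun σ => σ.card = k+1))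
        (p := fun σ => a+m+1 ∈ σ)
      rw [Finset.filter_filter, Finset.filter_filter] at hsplit
      -- part without the last vertex
      have hA : (pathIndep a (m+2)).filter (fun σ => σ.card = k+1 ∧ ¬ a+m+1 ∈ σ)
          = (pathIndep a (m+1)).filter (fun σ => σ.card = k+1) := by
        ext σ
        simp only [Finset.mem_filter, mem_pathIndep]
        constructor
        · rintro ⟨⟨h1, h2⟩, h3, h4⟩
          refine ⟨⟨fun i hi => ?_, h2⟩, h3⟩
          have := h1 i hi
          have : i ≠ a+m+1 := fun h => h4 (h ▸ hi)
          omega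
        · rintro ⟨⟨h1, h2⟩, h3⟩
          refine ⟨⟨fun i hi => by have := h1 i hi; omega, h2⟩, h3,
            fun hmem => by have := h1 _ hmem; omega⟩
      -- part with the last vertex
      have hB : ((pathIndep a (m+2)).filter (fun σ => σ.card = k+1 ∧ a+m+1 ∈ σ)).card
          = ((pathIndep a m).filter (fun σ => σ.card = k)).card := by
        apply Finset.card_nbij' (fun σ => σ.erase (a+m+1)) (fun τ => insert (a+m+1) τ)
        · intro σ hσ
          simp only [Finset.mem_coe, Finset.mem_filter, mem_pathIndep] at hσ ⊢
          obtain ⟨⟨h1, h2⟩, h3, h4⟩ := hσ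
          have hm : a+m ∉ σ := fun h => h2 _ h (by simpa using h4)
          refine ⟨⟨fun i hi => ?_, fun i hi => ?_⟩, ?_⟩
          · rw [Finset.mem_erase] at hi
            have := h1 i hi.2
            have : i ≠ a+m := fun h => hm (h ▸ hi.2)
            have := hi.1; omega
          · rw [Finset.mem_erase] at hi ⊢
            push_neg
            intro _
            exact h2 i hi.2
          · rw [Finset.card_erase_of_mem h4, h3]
            omega
        · intro τ hτ
          simp only [Finset.mem_coe, Finset.mem_filter, mem_pathIndep] at hτ ⊢
          obtain ⟨⟨h1, h2⟩, h3⟩ := hτ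
          have hne : a+m+1 ∉ τ := fun h => by have := h1 _ h; omega
          refine ⟨⟨fun i hi => ?_, fun i hi hmem => ?_⟩, ?_, by simp⟩
          · rw [Finset.mem_insert] at hi
            rcases hi with rfl | hi
            · omega
            · have := h1 i hi; omega
          · rw [Finset.mem_insert] at hi hmem
            rcases hi with rfl | hi
            · rcases hmem with h | h
              · omega
              · have := h1 _ h; omega
            · rcases hmem with h | h
              · have := h1 _ hi; omega
              · exact h2 i hi h
          · rw [Finset.card_insert_of_notMem hne, h3]
        · intro σ hσ
          simp only [Finset.mem_coe, Finset.mem_filter] at hσ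
          exact Finset.insert_erase hσ.2.2
        · intro τ hτ
          simp only [Finset.mem_coe, Finset.mem_filter, mem_pathIndep] at hτ
          exact Finset.erase_insert (fun h => by have := hτ.1.1 _ h; omega)
      rw [hA, hB, ih (m+1) (by omega) (k+1) a, ih m (by omega) k a] at hsplit
      rw [← hsplit]
      rcases le_or_gt k (m+1) with h | h
      · have e1 : m+2+1-(k+1) = (m+1+1-(k+1))+1 := by omega
        have e2 : m+1+1-(k+1) = m+1-k := by omega
        rw [e1, e2, Nat.choose_succ_succ, Nat.add_comm]
      · have e1 : m+1-k = 0 := by omega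
        have e2 : m+1+1-(k+1) = 0 := by omega
        have e3 : m+2+1-(k+1) = 0 := by omega
        have c1 : (0:ℕ).choose k = 0 := Nat.choose_eq_zero_of_lt (by omega)
        have c2 : (0:ℕ).choose (k+1) = 0 := Nat.choose_eq_zero_of_lt (by omega)
        rw [e1, e2, e3, c1, c2]

lemma mem_cycleIndep {L : ℕ} {σ : Finset ℕ} :
    σ ∈ cycleIndep L ↔ (∀ i ∈ σ, i < L) ∧ ∀ i ∈ σ, (i + 1) % L ∉ σ := by
  simp [cycleIndep, Finset.subset_iff, Finset.mem_range]

lemma cycle_count (L k : ℕ) (hL : 3 ≤ L) (hk : 1 ≤ k) :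
    ((cycleIndep L).filter (fun σ => σ.card = k)).card
      = (L - k).choose k + (L - k - 1).choose (k - 1) := by
  have hsplit := Finset.card_filter_add_card_filter_not
    (s := (cycleIndep L).filter (fun σ => σ.card = k)) (p := fun σ => 0 ∈ σ)
  rw [Finset.filter_filter, Finset.filter_filter] at hsplit
  -- sets not containing 0 are path independent sets on {1, ..., L-1}
  have hA : (cycleIndep L).filter (fun σ => σ.card = k ∧ ¬ 0 ∈ σ)
      = (pathIndep 1 (L-1)).filter (fun σ => σ.card = k) := by
    ext σ
    simp only [Finset.mem_filter, mem_cycleIndep, mem_pathIndep]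
    constructor
    · rintro ⟨⟨h1, h2⟩, h3, h4⟩
      refine ⟨⟨fun i hi => ?_, fun i hi hmem => ?_⟩, h3⟩
      · have := h1 i hi
        have : i ≠ 0 := fun h => h4 (h ▸ hi)
        omega
      · have hiL := h1 i hi
        have hiL' := h1 _ hmem
        rcases Nat.lt_or_ge (i+1) L with hlt | hge
        · exact h2 i hi (by rwa [Nat.mod_eq_of_lt hlt])
        · omega
    · rintro ⟨⟨h1, h2⟩, h3⟩
      refine ⟨⟨fun i hi => by have := h1 i hi; omega, fun i hi hmem => ?_⟩, h3,
        fun hmem => by have := h1 _ hmem; omega⟩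
      have hiL := h1 i hi
      rcases Nat.lt_or_ge (i+1) L with hlt | hge
      · rw [Nat.mod_eq_of_lt hlt] at hmem
        exact h2 i hi hmem
      · have : i + 1 = L := by omega
        rw [this, Nat.mod_self] at hmem
        have := h1 _ hmem; omega
  -- sets containing 0 biject with path independent sets on {2, ..., L-2}
  have hB : ((cycleIndep L).filter (fun σ => σ.card = k ∧ 0 ∈ σ)).card
      = ((pathIndep 2 (L-3)).filter (fun σ => σ.card = k - 1)).card := by
    apply Finset.card_nbij' (fun σ => σ.erase 0) (fun τ => insert 0 τ)
    · intro σ hσ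
      simp only [Finset.mem_coe, Finset.mem_filter, mem_cycleIndep, mem_pathIndep] at hσ ⊢
      obtain ⟨⟨h1, h2⟩, h3, h4⟩ := hσ
      have h1' : 1 ∉ σ := by
        have := h2 0 h4
        rwa [Nat.mod_eq_of_lt (by omega)] at this
      have hL1 : L - 1 ∉ σ := by
        intro hmem
        have := h2 _ hmem
        rw [show L - 1 + 1 = L by omega, Nat.mod_self] at this
        exact this h4
      refine ⟨⟨fun i hi => ?_, fun i hi hmem => ?_⟩, ?_⟩
      · rw [Finset.mem_erase] at hi
        have := h1 i hi.2
        have hi0 := hi.1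
        have hi1 : i ≠ 1 := fun h => h1' (h ▸ hi.2)
        have hiL : i ≠ L - 1 := fun h => hL1 (h ▸ hi.2)
        omega
      · rw [Finset.mem_erase] at hi hmem
        have hiL := h1 _ hi.2
        have hne : i ≠ L - 1 := fun h => hL1 (h ▸ hi.2)
        have hmod : (i + 1) % L = i + 1 := Nat.mod_eq_of_lt (by omega)
        exact h2 i hi.2 (hmod.symm ▸ hmem.2)
      · rw [Finset.card_erase_of_mem h4, h3]
    · intro τ hτ
      simp only [Finset.mem_coe, Finset.mem_filter, mem_pathIndep, mem_cycleIndep] at hτ ⊢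
      obtain ⟨⟨h1, h2⟩, h3⟩ := hτ
      have h0 : 0 ∉ τ := fun h => by have := h1 _ h; omega
      refine ⟨⟨fun i hi => ?_, fun i hi hmem => ?_⟩, ?_, by simp⟩
      · rw [Finset.mem_insert] at hi
        rcases hi with rfl | hi
        · omega
        · have := h1 i hi; omega
      · rw [Finset.mem_insert] at hi hmem
        rcases hi with rfl | hi
        · rw [Nat.mod_eq_of_lt (show 0 + 1 < L by omega)] at hmem
          rcases hmem with h | h
          · omega
          · have := h1 _ h; omega
        · have hiL := h1 _ hi
          rw [Nat.mod_eq_of_lt (show i + 1 < L by omega)] at hmem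
          rcases hmem with h | h
          · omega
          · exact h2 i hi h
      · rw [Finset.card_insert_of_notMem h0, h3]
        omega
    · intro σ hσ
      simp only [Finset.mem_coe, Finset.mem_filter] at hσ
      exact Finset.insert_erase hσ.2.2
    · intro τ hτ
      simp only [Finset.mem_coe, Finset.mem_filter, mem_pathIndep] at hτ
      exact Finset.erase_insert (fun h => by have := hτ.1.1 _ h; omega)
  rw [hA, hB, path_count (L-1) k 1, path_count (L-3) (k-1) 2] at hsplit
  rw [← hsplit]
  have e1 : L - 1 + 1 - k = L - k := by omega
  have e2 : L - 3 + 1 - (k - 1) = L - k - 1 := by omega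
  rw [e1, e2, Nat.add_comm]

/-- The number of independent sets of size `k ≥ 1` in the cycle graph on `L ≥ 3`
vertices equals `(L/(L-k))·C(L-k, k)`; stated multiplicatively to avoid
division: `(L-k)` times the count equals `L·C(L-k,k)`. -/
theorem cycle_independent_sets_count (L k : ℕ) (hL : 3 ≤ L) (hk : 1 ≤ k) :
    (L - k) * ((cycleIndep L).filter (fun σ => σ.card = k)).card =
      L * (L - k).choose k := by
  rcases le_or_gt L k with h | h
  · have h1 : L - k = 0 := by omega
    have h2 : (0:ℕ).choose k = 0 := Nat.choose_eq_zero_of_lt (by omega)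
    rw [h1, h2, Nat.zero_mul, Nat.mul_zero]
  · rw [cycle_count L k hL hk]
    obtain ⟨n, hn⟩ : ∃ n, L - k = n + 1 := ⟨L-k-1, by omega⟩
    obtain ⟨j, hj⟩ : ∃ j, k = j + 1 := ⟨k-1, by omega⟩
    have hL' : L = (n+1) + (j+1) := by omega
    have key : (n+1) * n.choose j = (n+1).choose (j+1) * (j+1) := Nat.add_one_mul_choose_eq n j
    rw [hn, hj]
    simp only [Nat.add_sub_cancel]
    rw [Nat.mul_add, key, hL']
    ring
end

section
/- For any natural numbers r, s with r + s ≥ 2 and any residue c, the following binomial recursion holds: Σ_{l≥0} C(r+s, c+3l) = 2^{r+s-2} + Σ_{l≥0} C(r+s-2, c+3l-1), where binomial coefficients with negative or out-of-range lower index are zero. -/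
open Finset

private def T (n j : ℕ) : ℕ := ∑ k ∈ range (n+1), if k % 3 = j then n.choose k else 0

private lemma T_pascal (n j : ℕ) (hj : j < 3) :
    T (n+1) j = T n j + T n ((j+2) % 3) := by
  unfold T
  rw [Finset.sum_range_succ' _ (n+1)]
  have key : ∀ k, (if (k+1) % 3 = j then (n+1).choose (k+1) else 0) =
      (if k % 3 = (j+2) % 3 then n.choose k else 0) +
      (if (k+1) % 3 = j then n.choose (k+1) else 0) := by
    intro k
    by_cases hk : (k+1) % 3 = j
    · have hk' : k % 3 = (j+2) % 3 := by omega
      simp [hk, hk', Nat.choose_succ_succ]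
    · have hk' : k % 3 ≠ (j+2) % 3 := by omega
      simp [hk, hk']
  calc (∑ k ∈ range (n+1), if (k+1) % 3 = j then (n+1).choose (k+1) else 0) +
        (if 0 % 3 = j then (n+1).choose 0 else 0)
      = ((∑ k ∈ range (n+1), if k % 3 = (j+2) % 3 then n.choose k else 0) +
         ∑ k ∈ range (n+1), if (k+1) % 3 = j then n.choose (k+1) else 0) +
        (if 0 % 3 = j then n.choose 0 else 0) := by
        rw [← Finset.sum_add_distrib]
        simp only [Nat.choose_zero_right]
        rw [Finset.sum_congr rfl (fun k _ => key k)]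
    _ = (∑ k ∈ range (n+1), if k % 3 = (j+2) % 3 then n.choose k else 0) +
        ((∑ k ∈ range (n+1), if (k+1) % 3 = j then n.choose (k+1) else 0) +
         (if 0 % 3 = j then n.choose 0 else 0)) := by ring
    _ = (∑ k ∈ range (n+1), if k % 3 = (j+2) % 3 then n.choose k else 0) +
        (∑ k ∈ range (n+2), if k % 3 = j then n.choose k else 0) := by
        rw [Finset.sum_range_succ' (fun k => if k % 3 = j then n.choose k else 0) (n+1)]
    _ = (∑ k ∈ range (n+1), if k % 3 = j then n.choose k else 0) +
        (∑ k ∈ range (n+1), if k % 3 = (j+2) % 3 then n.choose k else 0) := by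
        rw [Finset.sum_range_succ (fun k => if k % 3 = j then n.choose k else 0) (n+1),
          Nat.choose_succ_self]
        simp only [ite_self]
        ring

private lemma T_total (n : ℕ) : T n 0 + T n 1 + T n 2 = 2 ^ n := by
  unfold T
  rw [← Finset.sum_add_distrib, ← Finset.sum_add_distrib, ← Nat.sum_range_choose]
  refine Finset.sum_congr rfl fun k _ => ?_
  have h : k % 3 = 0 ∨ k % 3 = 1 ∨ k % 3 = 2 := by omega
  rcases h with h | h | h <;> simp [h]

private lemma T_main (n c : ℕ) (hc : c ≤ 2) :
    T (n+2) c = 2 ^ n + T n ((c+2) % 3) := by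
  have hc3 : c < 3 := by omega
  have p1 := T_pascal (n+1) c hc3
  rw [show n+1+1 = n+2 from rfl] at p1
  have p2 := T_pascal n c hc3
  have p3 := T_pascal n ((c+2) % 3) (by omega)
  have ht := T_total n
  interval_cases c <;> norm_num at p1 p2 p3 ⊢ <;> omega

private lemma L1 (n c : ℕ) (hc : c < 3) :
    ∑ l ∈ range (n+1), n.choose (c + 3 * l) = T n c := by
  unfold T
  have step : ∀ l ∈ range (n+1), n.choose (c + 3 * l) =
      ∑ k ∈ range (n+1), if c + 3 * l = k then n.choose k else 0 := by
    intro l _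
    rw [Finset.sum_ite_eq]
    by_cases h : c + 3 * l ≤ n
    · simp [Finset.mem_range, Nat.lt_succ_of_le h]
    · rw [if_neg (by simp [Finset.mem_range]; omega), Nat.choose_eq_zero_of_lt (by omega)]
  rw [Finset.sum_congr rfl step, Finset.sum_comm]
  refine Finset.sum_congr rfl fun k hk => ?_
  rw [Finset.mem_range] at hk
  by_cases h : k % 3 = c
  · rw [if_pos h]
    rw [Finset.sum_eq_single ((k - c) / 3)]
    · rw [if_pos (by omega)]
    · intro l _ hl
      rw [if_neg (by omega)]
    · intro hmem
      exact absurd (Finset.mem_range.mpr (by omega)) hmem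
  · rw [if_neg h]
    refine Finset.sum_eq_zero fun l _ => ?_
    rw [if_neg (by omega)]

private lemma L2 (m c : ℕ) (hc : c ≤ 2) :
    (∑ l ∈ range (m+3), if c + 3 * l = 0 then 0 else m.choose (c + 3 * l - 1)) =
      T m ((c+2) % 3) := by
  unfold T
  have step : ∀ l ∈ range (m+3),
      (if c + 3 * l = 0 then 0 else m.choose (c + 3 * l - 1)) =
      ∑ k ∈ range (m+1), if c + 3 * l = k + 1 then m.choose k else 0 := by
    intro l _
    by_cases h0 : c + 3 * l = 0
    · rw [if_pos h0]
      exact (Finset.sum_eq_zero fun k _ => by rw [if_neg (by omega)]).symm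
    · rw [if_neg h0]
      have : ∀ k ∈ range (m+1), (if c + 3 * l = k + 1 then m.choose k else 0) =
          if c + 3 * l - 1 = k then m.choose k else 0 := by
        intro k _
        congr 1
        simp only [eq_iff_iff]
        omega
      rw [Finset.sum_congr rfl this, Finset.sum_ite_eq]
      by_cases h : c + 3 * l - 1 ≤ m
      · simp [Finset.mem_range, Nat.lt_succ_of_le h]
      · rw [if_neg (by simp [Finset.mem_range]; omega), Nat.choose_eq_zero_of_lt (by omega)]
  rw [Finset.sum_congr rfl step, Finset.sum_comm]
  refine Finset.sum_congr rfl fun k hk => ?_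
  rw [Finset.mem_range] at hk
  by_cases h : k % 3 = (c+2) % 3
  · rw [if_pos h]
    rw [Finset.sum_eq_single ((k + 1 - c) / 3)]
    · rw [if_pos (by omega)]
    · intro l _ hl
      rw [if_neg (by omega)]
    · intro hmem
      exact absurd (Finset.mem_range.mpr (by omega)) hmem
  · rw [if_neg h]
    refine Finset.sum_eq_zero fun l _ => ?_
    rw [if_neg (by omega)]



/-- Binomial recursion used in the computation of the anomalous tiling count:
for `r + s ≥ 2` and a residue `c ∈ {0,1,2}`,
`Σ_{l≥0} C(r+s, c+3l) = 2^{r+s-2} + Σ_{l≥0} C(r+s-2, c+3l-1)`,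
where binomial coefficients with negative lower index are zero
(the `l = 0`, `c = 0` term of the right-hand sum is guarded). -/
theorem binomial_mod_three_recursion (r s c : ℕ) (h : 2 ≤ r + s) (hc : c ≤ 2) :
    (∑ l ∈ Finset.range (r + s + 1), (r + s).choose (c + 3 * l)) =
      2 ^ (r + s - 2) +
        ∑ l ∈ Finset.range (r + s + 1),
          (if c + 3 * l = 0 then 0 else (r + s - 2).choose (c + 3 * l - 1)) := by
  obtain ⟨m, hm⟩ : ∃ m, r + s = m + 2 := ⟨r + s - 2, by omega⟩
  rw [hm]
  simp only [Nat.add_sub_cancel]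
  have e1 : m + 2 + 1 = m + 3 := rfl
  rw [e1, show (m + 3 : ℕ) = (m + 2) + 1 from rfl, L1 (m+2) c (by omega)]
  rw [show (m + 2) + 1 = m + 3 from rfl, L2 m c hc]
  exact T_main m c hc
end
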